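/- Let m > 1, K ≥ 1, and let 𝔞 : ℝ → ℝ be even, continuous, differentiable on (0,∞), with |𝔞′(r)| ≤ K r^{(m−3)/2} for all r > 0. Then for every α ∈ [0,1] there is a constant N depending only on K, m and α such that for every δ > 0 and all r, ζ ∈ ℝ with |r − ζ| ≤ δ and |ζ| ≥ 2δ one has |𝔞(r) − 𝔞(ζ)| ≤ N δ^α |ζ|^{(m−1)/2 − α}. -/

import Mathlib

open Real Set

private lemma modulus_aux (m K : ℝ) (hK : 1 ≤ K) (α : ℝ) (hα : α ∈ Set.Icc (0:ℝ) 1)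
    (a : ℝ → ℝ)
    (hdiff : ∀ r : ℝ, 0 < r → DifferentiableAt ℝ a r)
    (hderiv : ∀ r : ℝ, 0 < r → |deriv a r| ≤ K * r ^ ((m - 3) / 2))
    (δ : ℝ) (hδ : 0 < δ) (r ζ : ℝ) (hrζ : |r - ζ| ≤ δ) (hζ : 2 * δ ≤ ζ) :
    |a r - a ζ| ≤ (K * 2 ^ |(m - 3)/2|) * δ ^ α * ζ ^ ((m - 1) / 2 - α) := by
  obtain ⟨hα0, hα1⟩ := hα
  have hζ0 : 0 < ζ := lt_of_lt_of_le (by linarith) hζ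
  set e := (m - 3) / 2 with he
  set C := K * 2 ^ |e| * ζ ^ e with hC
  set s := Set.Icc (ζ - δ) (ζ + δ) with hs
  have hpos : ∀ x ∈ s, 0 < x := fun x hx => by
    have h1 := hx.1; linarith
  have hbase : ∀ x ∈ s, x ^ e ≤ 2 ^ |e| * ζ ^ e := by
    intro x hx
    have hx0 := hpos x hx
    rcases le_or_gt 0 e with he0 | he0
    · have hx2 : x ≤ 2 * ζ := by have := hx.2; linarith
      calc x ^ e ≤ (2 * ζ) ^ e := Real.rpow_le_rpow hx0.le hx2 he0
        _ = 2 ^ e * ζ ^ e := Real.mul_rpow (by norm_num) hζ0.le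
        _ = 2 ^ |e| * ζ ^ e := by rw [abs_of_nonneg he0]
    · have hx2 : ζ / 2 ≤ x := by have := hx.1; linarith
      calc x ^ e ≤ (ζ / 2) ^ e := Real.rpow_le_rpow_of_nonpos (by linarith) hx2 he0.le
        _ = ζ ^ e / 2 ^ e := Real.div_rpow hζ0.le (by norm_num : (0:ℝ) ≤ 2) e
        _ = 2 ^ (-e) * ζ ^ e := by rw [Real.rpow_neg (by norm_num)]; ring
        _ = 2 ^ |e| * ζ ^ e := by rw [abs_of_neg he0]
  have hC0 : 0 ≤ C := by
    apply mul_nonneg (mul_nonneg (by linarith) (Real.rpow_nonneg (by norm_num) _))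
      (Real.rpow_nonneg hζ0.le _)
  have hbound : ∀ x ∈ s, ‖deriv a x‖ ≤ C := by
    intro x hx
    rw [Real.norm_eq_abs]
    calc |deriv a x| ≤ K * x ^ e := hderiv x (hpos x hx)
      _ ≤ K * (2 ^ |e| * ζ ^ e) :=
          mul_le_mul_of_nonneg_left (hbase x hx) (by linarith)
      _ = C := by rw [hC]; ring
  have habs := abs_le.mp hrζ
  have hmem_r : r ∈ s := ⟨by linarith [habs.1], by linarith [habs.2]⟩
  have hmem_ζ : ζ ∈ s := ⟨by linarith, by linarith⟩
  have hmvt : ‖a r - a ζ‖ ≤ C * ‖r - ζ‖ :=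
    (convex_Icc _ _).norm_image_sub_le_of_norm_deriv_le
      (fun x hx => hdiff x (hpos x hx)) hbound hmem_ζ hmem_r
  have step1 : |a r - a ζ| ≤ C * δ := by
    rw [Real.norm_eq_abs] at hmvt
    calc |a r - a ζ| ≤ C * ‖r - ζ‖ := hmvt
      _ ≤ C * δ := mul_le_mul_of_nonneg_left (by rwa [Real.norm_eq_abs]) hC0
  refine step1.trans ?_
  have hδζ : δ ≤ ζ := by linarith
  have hsplit : δ = δ ^ α * δ ^ (1 - α) := by
    rw [← Real.rpow_add hδ]; norm_num
  have h2 : δ ^ (1 - α) ≤ ζ ^ (1 - α) :=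
    Real.rpow_le_rpow hδ.le hδζ (by linarith)
  have h3 : ζ ^ e * ζ ^ (1 - α) = ζ ^ ((m - 1) / 2 - α) := by
    rw [← Real.rpow_add hζ0, he]; ring_nf
  calc C * δ = K * 2 ^ |e| * δ ^ α * (ζ ^ e * δ ^ (1 - α)) := by
        rw [hC]; nth_rewrite 1 [hsplit]; ring
    _ ≤ K * 2 ^ |e| * δ ^ α * (ζ ^ e * ζ ^ (1 - α)) := by
        apply mul_le_mul_of_nonneg_left
          (mul_le_mul_of_nonneg_left h2 (Real.rpow_nonneg hζ0.le _))
        exact mul_nonneg (mul_nonneg (by linarith) (Real.rpow_nonneg (by norm_num) _))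
          (Real.rpow_nonneg hδ.le _)
    _ = K * 2 ^ |e| * δ ^ α * ζ ^ ((m - 1) / 2 - α) := by rw [h3]

theorem modulus_interpolated (m K : ℝ) (hm : 1 < m) (hK : 1 ≤ K) :
    ∀ α : ℝ, α ∈ Set.Icc (0 : ℝ) 1 →
    ∃ N : ℝ, ∀ a : ℝ → ℝ,
      (∀ r : ℝ, a (-r) = a r) →
      Continuous a →
      (∀ r : ℝ, 0 < r → DifferentiableAt ℝ a r) →
      (∀ r : ℝ, 0 < r → |deriv a r| ≤ K * r ^ ((m - 3) / 2)) →
      ∀ δ : ℝ, 0 < δ → ∀ r ζ : ℝ, |r - ζ| ≤ δ → 2 * δ ≤ |ζ| →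
        |a r - a ζ| ≤ N * δ ^ α * |ζ| ^ ((m - 1) / 2 - α) := by
  intro α hα
  refine ⟨K * 2 ^ |(m - 3)/2|, ?_⟩
  intro a heven hcont hdiff hderiv δ hδ r ζ hrζ hζ
  rcases le_or_gt 0 ζ with h0 | h0
  · have hζ' : 2 * δ ≤ ζ := by rwa [abs_of_nonneg h0] at hζ
    rw [abs_of_nonneg h0]
    exact modulus_aux m K hK α hα a hdiff hderiv δ hδ r ζ hrζ hζ'
  · have hζ' : 2 * δ ≤ -ζ := by rwa [abs_of_neg h0] at hζ
    have h1 : |(-r) - (-ζ)| ≤ δ := by rw [show (-r) - (-ζ) = -(r - ζ) by ring, abs_neg]; exact hrζ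
    have := modulus_aux m K hK α hα a hdiff hderiv δ hδ (-r) (-ζ) h1 hζ'
    rw [heven r, heven ζ] at this
    rwa [abs_of_neg h0]
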